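/- Let d ≥ 1 and let n ∈ ℝ^d with |n| = 1; set n_f = n and n_el = −n, and for z ∈ ℝ^d write z_τ = z − (z·n_f)n_f. Let J be a finite index set with a distinguished element E ∈ J, let α_k ∈ ℝ and p_k, q_k ∈ ℝ for each k ∈ J, let c ≥ 0, let σ, τ be d×d real matrices, let p, p_E ∈ ℝ, let u, ḋ ∈ ℝ^d, and let g_k ∈ ℝ^d for each k ∈ J. Assume the interface conditions: (i) σ n_el − (Σ_{k∈J} α_k p_k) n_el + τ n_f − p n_f = 0; (ii) p_E = p − (τ n_f)·n_f; (iii) g_j · n_el = 0 for every j ∈ J with j ≠ E; (iv) u·n_f + (ḋ − g_E)·n_el = 0; (v) (τ n_f − p n_f)_τ = −c (u − ḋ)_τ. Then for all test vectors w, v ∈ ℝ^d the identity (p n_f − τ n_f)·v + ((Σ_{k∈J} α_k p_k) n_el − σ n_el)·w − Σ_{j∈J} q_j (g_j · n_el) = p_E (v·n_f + w·n_el) + c (u − ḋ)_τ · (v − w)_τ − q_E (u·n_f + ḋ·n_el) holds. -/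
import Mathlib


open Matrix

/-- Rewriting of the interface boundary terms arising from integration by parts,
using the pointwise fluid–poroelastic interface conditions (i)–(v)
(total stress balance, normal stress balance, no flux for compartments `j ≠ E`,
normal flux continuity, Beavers–Joseph–Saffman). Here `n_f = n`, `n_el = −n`,
and `z_τ = z − (z·n_f) n_f` denotes the tangential part. -/
theorem interface_terms_rewrite (d : ℕ) (hd : 1 ≤ d)
    (n : Fin d → ℝ) (hn : n ⬝ᵥ n = 1)
    (J : Type*) [Fintype J] (E : J)
    (α p' q : J → ℝ) (c : ℝ) (hc : 0 ≤ c)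
    (σ τ : Matrix (Fin d) (Fin d) ℝ)
    (p pE : ℝ) (u dd : Fin d → ℝ) (g : J → (Fin d → ℝ))
    -- (i) total stress balance
    (hi : σ.mulVec (-n) - (∑ k, α k * p' k) • (-n) + τ.mulVec n - p • n = 0)
    -- (ii) normal stress balance
    (hii : pE = p - (τ.mulVec n) ⬝ᵥ n)
    -- (iii) no flux for compartments j ≠ E
    (hiii : ∀ j : J, j ≠ E → g j ⬝ᵥ (-n) = 0)
    -- (iv) normal flux continuity
    (hiv : u ⬝ᵥ n + (dd - g E) ⬝ᵥ (-n) = 0)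
    -- (v) Beavers–Joseph–Saffman condition
    (hv : (τ.mulVec n - p • n) - (((τ.mulVec n - p • n) ⬝ᵥ n) • n)
            = -(c • ((u - dd) - (((u - dd) ⬝ᵥ n) • n)))) :
    ∀ w v : Fin d → ℝ,
      (p • n - τ.mulVec n) ⬝ᵥ v
        + ((∑ k, α k * p' k) • (-n) - σ.mulVec (-n)) ⬝ᵥ w
        - ∑ j, q j * (g j ⬝ᵥ (-n))
      = pE * (v ⬝ᵥ n + w ⬝ᵥ (-n))
        + c * (((u - dd) - (((u - dd) ⬝ᵥ n) • n)) ⬝ᵥ ((v - w) - (((v - w) ⬝ᵥ n) • n)))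
        - q E * (u ⬝ᵥ n + dd ⬝ᵥ (-n)) := by
  intro w v
  have hsum : ∑ j, q j * (g j ⬝ᵥ (-n)) = q E * (g E ⬝ᵥ (-n)) := by
    refine Finset.sum_eq_single E (fun j _ hj => by rw [hiii j hj, mul_zero])
      (fun h => absurd (Finset.mem_univ E) h)
  rw [hsum]
  have h1w : (σ.mulVec (-n) - (∑ k, α k * p' k) • (-n) + τ.mulVec n - p • n) ⬝ᵥ w = 0 := by
    rw [hi]; simp
  have h2 : ((τ.mulVec n - p • n) - (((τ.mulVec n - p • n) ⬝ᵥ n) • n)) ⬝ᵥ (v - w)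
        = (-(c • ((u - dd) - (((u - dd) ⬝ᵥ n) • n)))) ⬝ᵥ (v - w) := by rw [hv]
  simp only [sub_dotProduct, add_dotProduct, smul_dotProduct, neg_dotProduct,
    dotProduct_sub, dotProduct_add, dotProduct_smul, dotProduct_neg, smul_eq_mul] at h1w h2 hiv ⊢
  simp only [dotProduct_comm n v, dotProduct_comm n w, dotProduct_comm n u,
    dotProduct_comm n dd] at h1w h2 ⊢
  linear_combination -h1w - h2 + q E * hiv + (-(v ⬝ᵥ n - w ⬝ᵥ n)) * hii +
    ((p - c * (u ⬝ᵥ n - dd ⬝ᵥ n)) * (v ⬝ᵥ n - w ⬝ᵥ n)) * hn
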